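/- (Sandwich bound for Δ.) Let K = (G, M, I) be a finite formal context and s ∈ [0,1]; suppose the set {α ∈ [0,1/2] : ObsDiam(D_s(K); −α) > 0} is nonempty, put α_{−1} for its supremum and σ_{−1} for the smallest positive value attained by α ↦ ObsDiam(D_s(K); −α) on [0,1/2]. With Δ_−(D_s(K)) := Δ(D_s(K)) and Δ_+(D_s(K)) := Δ(D_s(K)) + (1/2 − α_{−1})·σ_{−1}, one has Δ_−(D_s(K)) ≤ Δ(D(K)) ≤ Δ_+(D_s(K)). -/

import Mathlib

open Set

/-- Attribute derivation `A'` of an object set. -/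
def extentPrime {G M : Type*} (I : G → M → Prop) (A : Set G) : Set M :=
  {m | ∀ g ∈ A, I g m}

/-- Object derivation `B'` of an attribute set. -/
def intentPrime {G M : Type*} (I : G → M → Prop) (B : Set M) : Set G :=
  {g | ∀ m ∈ B, I g m}

/-- `(A, B)` is a formal concept of the context `(G, M, I)`. -/
def IsConcept {G M : Type*} (I : G → M → Prop) (A : Set G) (B : Set M) : Prop :=
  extentPrime I A = B ∧ intentPrime I B = A

/-- Normalized counting measure `ν_G(A) = |A| / |G|`. -/
noncomputable def nuG (G : Type*) [Fintype G] (A : Set G) : ℝ :=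
  (A.ncard : ℝ) / (Fintype.card G : ℝ)

/-- Normalized counting measure `ν_M(B) = |B| / |M|`. -/
noncomputable def nuM (M : Type*) [Fintype M] (B : Set M) : ℝ :=
  (B.ncard : ℝ) / (Fintype.card M : ℝ)

/-- Observable diameter `ObsDiam(𝒟(K); -α)` of the full geometric data set;
note that `sSup ∅ = 0` in `ℝ`. -/
noncomputable def ObsDiamFull {G M : Type*} [Fintype G] [Fintype M]
    (I : G → M → Prop) (α : ℝ) : ℝ :=
  sSup {x : ℝ | ∃ A : Set G, ∃ B : Set M, IsConcept I A B ∧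
    α < nuM M B ∧ nuM M B < 1 - α ∧ x = nuG G A}

/-- Observable diameter `ObsDiam(𝒟ₛ(K); -α)` of the geometric data set restricted
to concepts with minimum support `s`; note that `sSup ∅ = 0` in `ℝ`. -/
noncomputable def ObsDiamS {G M : Type*} [Fintype G] [Fintype M]
    (I : G → M → Prop) (s α : ℝ) : ℝ :=
  sSup {x : ℝ | ∃ A : Set G, ∃ B : Set M, IsConcept I A B ∧ s ≤ nuG G A ∧
    α < nuM M B ∧ nuM M B < 1 - α ∧ x = nuG G A}

/-- `Δ(𝒟(K)) = ∫_0^{1/2} ObsDiam(𝒟(K); -α) dα`. -/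
noncomputable def DeltaFull {G M : Type*} [Fintype G] [Fintype M]
    (I : G → M → Prop) : ℝ :=
  ∫ α in (0:ℝ)..(1/2 : ℝ), ObsDiamFull I α

/-- `Δ(𝒟ₛ(K)) = ∫_0^{1/2} ObsDiam(𝒟ₛ(K); -α) dα`. -/
noncomputable def DeltaS {G M : Type*} [Fintype G] [Fintype M]
    (I : G → M → Prop) (s : ℝ) : ℝ :=
  ∫ α in (0:ℝ)..(1/2 : ℝ), ObsDiamS I s α

theorem delta_sandwich {G M : Type*} [Fintype G] [Fintype M] [Nonempty G] [Nonempty M]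
    (I : G → M → Prop)
    (s : ℝ) (hs : s ∈ Set.Icc (0:ℝ) 1)
    (hne : {α : ℝ | α ∈ Set.Icc (0:ℝ) (1/2) ∧ 0 < ObsDiamS I s α}.Nonempty)
    (σ : ℝ)
    (hσ : IsLeast {v : ℝ | 0 < v ∧ ∃ α ∈ Set.Icc (0:ℝ) (1/2), ObsDiamS I s α = v} σ) :
    DeltaS I s ≤ DeltaFull I ∧
    DeltaFull I ≤ DeltaS I s +
      (1/2 - sSup {α : ℝ | α ∈ Set.Icc (0:ℝ) (1/2) ∧ 0 < ObsDiamS I s α}) * σ := by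

  classical
  -- abbreviations
  set T : Set ℝ := {α : ℝ | α ∈ Set.Icc (0:ℝ) (1/2) ∧ 0 < ObsDiamS I s α} with hTdef
  set a : ℝ := sSup T with hadef
  set sF : ℝ → Set ℝ := fun α => {x : ℝ | ∃ A : Set G, ∃ B : Set M, IsConcept I A B ∧
    α < nuM M B ∧ nuM M B < 1 - α ∧ x = nuG G A} with hsF
  set sS : ℝ → Set ℝ := fun α => {x : ℝ | ∃ A : Set G, ∃ B : Set M, IsConcept I A B ∧
    s ≤ nuG G A ∧ α < nuM M B ∧ nuM M B < 1 - α ∧ x = nuG G A} with hsS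
  have hFdef : ∀ α, ObsDiamFull I α = sSup (sF α) := fun α => rfl
  have hSdef : ∀ α, ObsDiamS I s α = sSup (sS α) := fun α => rfl
  -- basic bounds on nuG
  have hcardG : (0:ℝ) < Fintype.card G := by
    exact_mod_cast Fintype.card_pos
  have hnuG_nonneg : ∀ A : Set G, 0 ≤ nuG G A := by
    intro A; unfold nuG; positivity
  have hnuG_le_one : ∀ A : Set G, nuG G A ≤ 1 := by
    intro A
    unfold nuG
    rw [div_le_one hcardG]
    have : A.ncard ≤ (Set.univ : Set G).ncard :=
      Set.ncard_le_ncard (Set.subset_univ A) Set.finite_univ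
    rw [Set.ncard_univ, Nat.card_eq_fintype_card] at this
    exact_mod_cast this
  -- elements of the sup-sets are in [0,1]
  have hmemF : ∀ α, ∀ x ∈ sF α, 0 ≤ x ∧ x ≤ 1 := by
    rintro α x ⟨A, B, _, _, _, rfl⟩
    exact ⟨hnuG_nonneg A, hnuG_le_one A⟩
  have hmemS : ∀ α, ∀ x ∈ sS α, 0 ≤ x ∧ x ≤ 1 := by
    rintro α x ⟨A, B, _, _, _, _, rfl⟩
    exact ⟨hnuG_nonneg A, hnuG_le_one A⟩
  have hbddF : ∀ α, BddAbove (sF α) := fun α => ⟨1, fun x hx => (hmemF α x hx).2⟩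
  have hbddS : ∀ α, BddAbove (sS α) := fun α => ⟨1, fun x hx => (hmemS α x hx).2⟩
  have hF_nonneg : ∀ α, 0 ≤ ObsDiamFull I α := fun α =>
    Real.sSup_nonneg (fun x hx => (hmemF α x hx).1)
  have hS_nonneg : ∀ α, 0 ≤ ObsDiamS I s α := fun α =>
    Real.sSup_nonneg (fun x hx => (hmemS α x hx).1)
  -- a sup-comparison helper
  have sup_le_sup : ∀ {u v : Set ℝ}, (∀ x ∈ v, 0 ≤ x) → BddAbove v → u ⊆ v →
      sSup u ≤ sSup v := by
    intro u v hv hb hsub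
    rcases u.eq_empty_or_nonempty with h | h
    · rw [h, Real.sSup_empty]
      exact Real.sSup_nonneg hv
    · exact csSup_le_csSup hb h hsub
  -- S ≤ F pointwise
  have hSF : ∀ α, ObsDiamS I s α ≤ ObsDiamFull I α := by
    intro α
    refine sup_le_sup (fun x hx => (hmemF α x hx).1) (hbddF α) ?_
    rintro x ⟨A, B, h1, _, h3, h4, h5⟩
    exact ⟨A, B, h1, h3, h4, h5⟩
  -- antitonicity
  have antiF : Antitone (ObsDiamFull I) := by
    intro α β hab
    refine sup_le_sup (fun x hx => (hmemF α x hx).1) (hbddF α) ?_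
    rintro x ⟨A, B, h1, h3, h4, h5⟩
    exact ⟨A, B, h1, lt_of_le_of_lt hab h3, h4.trans_le (by linarith), h5⟩
  have antiS : Antitone (ObsDiamS I s) := by
    intro α β hab
    refine sup_le_sup (fun x hx => (hmemS α x hx).1) (hbddS α) ?_
    rintro x ⟨A, B, h1, h2, h3, h4, h5⟩
    exact ⟨A, B, h1, h2, lt_of_le_of_lt hab h3, h4.trans_le (by linarith), h5⟩
  -- when S is positive, F = S
  have key1 : ∀ α, 0 < ObsDiamS I s α → ObsDiamFull I α = ObsDiamS I s α := by
    intro α hpos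
    have hne' : (sS α).Nonempty := by
      by_contra h
      rw [Set.not_nonempty_iff_eq_empty] at h
      rw [hSdef, h, Real.sSup_empty] at hpos
      exact lt_irrefl _ hpos
    have hsle : s ≤ ObsDiamS I s α := by
      obtain ⟨x, hx⟩ := hne'
      obtain ⟨A, B, _, h2, _, _, h5⟩ := hx
      calc s ≤ x := h5 ▸ h2
        _ ≤ sSup (sS α) := le_csSup (hbddS α) ⟨A, B, ‹_›, h2, ‹_›, ‹_›, h5⟩
    refine le_antisymm ?_ (hSF α)
    rw [hFdef, hSdef]
    refine Real.sSup_le ?_ (hS_nonneg α)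
    rintro x ⟨A, B, h1, h3, h4, h5⟩
    by_cases hcase : s ≤ nuG G A
    · exact le_csSup (hbddS α) ⟨A, B, h1, hcase, h3, h4, h5⟩
    · push_neg at hcase
      rw [hSdef] at hsle
      linarith [h5 ▸ hcase]
  -- facts about T and a
  have hT_bdd : BddAbove T := ⟨1/2, fun t ht => ht.1.2⟩
  have ha_mem : a ∈ Set.Icc (0:ℝ) (1/2) := by
    constructor
    · obtain ⟨t, ht⟩ := hne
      exact ht.1.1.trans (le_csSup hT_bdd ht)
    · exact csSup_le hne (fun t ht => ht.1.2)
  have hS_pos : ∀ α, α < a → 0 < ObsDiamS I s α := by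
    intro α hα
    obtain ⟨t, ht, hαt⟩ := exists_lt_of_lt_csSup hne hα
    exact lt_of_lt_of_le ht.2 (antiS hαt.le)
  -- σ is attained just before a, and F ≤ σ past a
  obtain ⟨⟨hσpos, α₀, hα₀mem, hα₀⟩, hσlb⟩ := hσ
  have hα₀a : α₀ ≤ a := le_csSup hT_bdd ⟨hα₀mem, hα₀ ▸ hσpos⟩
  set β : ℝ := (α₀ + a)/2 with hβdef
  have hβ1 : α₀ ≤ β := by rw [hβdef]; linarith
  have hβ2 : β ≤ a := by rw [hβdef]; linarith
  have hSβpos : 0 < ObsDiamS I s β := by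
    rcases lt_or_eq_of_le hβ2 with h | h
    · exact hS_pos β h
    · have : β = α₀ := by rw [hβdef] at h ⊢; linarith
      rw [this, hα₀]; exact hσpos
  have hSβ : ObsDiamS I s β = σ := by
    refine le_antisymm (hα₀ ▸ antiS hβ1) ?_
    refine hσlb ⟨hSβpos, β, ⟨by linarith [hα₀mem.1], by linarith [ha_mem.2]⟩, rfl⟩
  have hFβ : ObsDiamFull I β = σ := by rw [key1 β hSβpos, hSβ]
  have key2 : ∀ α, a < α → ObsDiamFull I α ≤ σ := by
    intro α hα
    calc ObsDiamFull I α ≤ ObsDiamFull I β := antiF (by linarith)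
      _ = σ := hFβ
  -- integrability
  have intF : ∀ u v : ℝ, IntervalIntegrable (ObsDiamFull I) MeasureTheory.volume u v :=
    fun u v => ((antiF.antitoneOn _).intervalIntegrable)
  have intS : ∀ u v : ℝ, IntervalIntegrable (ObsDiamS I s) MeasureTheory.volume u v :=
    fun u v => ((antiS.antitoneOn _).intervalIntegrable)
  constructor
  · -- first inequality
    exact intervalIntegral.integral_mono_on (by norm_num) (intS 0 (1/2)) (intF 0 (1/2))
      (fun x _ => hSF x)
  · -- second inequality
    have hsplitF : DeltaFull I =
        (∫ α in (0:ℝ)..a, ObsDiamFull I α) + ∫ α in a..(1/2:ℝ), ObsDiamFull I α :=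
      (intervalIntegral.integral_add_adjacent_intervals (intF 0 a) (intF a (1/2))).symm
    have hsplitS : DeltaS I s =
        (∫ α in (0:ℝ)..a, ObsDiamS I s α) + ∫ α in a..(1/2:ℝ), ObsDiamS I s α :=
      (intervalIntegral.integral_add_adjacent_intervals (intS 0 a) (intS a (1/2))).symm
    have h1 : (∫ α in (0:ℝ)..a, ObsDiamFull I α) = ∫ α in (0:ℝ)..a, ObsDiamS I s α := by
      refine intervalIntegral.integral_congr_ae ?_
      have hae : ∀ᵐ x : ℝ, x ≠ a := by
        rw [MeasureTheory.ae_iff]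
        have : {x : ℝ | ¬ x ≠ a} = {a} := by ext x; simp
        rw [this]
        exact Real.volume_singleton
      filter_upwards [hae] with x hx hxmem
      rw [Set.uIoc_of_le ha_mem.1] at hxmem
      exact key1 x (hS_pos x (lt_of_le_of_ne hxmem.2 hx))
    have h2 : (∫ α in a..(1/2:ℝ), ObsDiamFull I α) ≤ (1/2 - a) * σ := by
      have hconst : (∫ α in a..(1/2:ℝ), σ) = (1/2 - a) * σ := by
        rw [intervalIntegral.integral_const, smul_eq_mul]
      rw [← hconst, intervalIntegral.integral_of_le ha_mem.2,
        intervalIntegral.integral_of_le ha_mem.2]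
      refine MeasureTheory.setIntegral_mono_on (intF a (1/2)).1
        (MeasureTheory.integrableOn_const (by
          rw [Real.volume_Ioc]; exact ENNReal.ofReal_ne_top))
        measurableSet_Ioc ?_
      exact fun x hx => key2 x hx.1
    have h3 : (0:ℝ) ≤ ∫ α in a..(1/2:ℝ), ObsDiamS I s α :=
      intervalIntegral.integral_nonneg ha_mem.2 (fun x _ => hS_nonneg x)
    rw [hsplitF, hsplitS, h1]
    linarith
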